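/- arXiv:2412.17600 — 3 statements merged into one kernel-verified Lean document; each statement's English description precedes it below -/
import Mathlib

section
/- Define β₄(x, y, t) = −3x − (4/π)y − (2/π)t + (16/π)x² and β₆(x, y, t) = −4y + (48/π)xy + (24/π)xt. Let u₄, u₆ : ℝ → ℝ be differentiable at 0, with β₄(u₄(t), u₆(t), t) = 0 and β₆(u₄(t), u₆(t), t) = 0 for all t in a neighborhood of 0, and (u₄(0), u₆(0)) = (3π/16, 0). Then u₄′(0) = −8/(15π) and u₆′(0) = −9/10. -/
open Real Filter Topology

/-- One-loop β-function of the quartic coupling for the `p = 3` model with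
disorder coupling `t`. -/
noncomputable def beta4 (x y t : ℝ) : ℝ :=
  -3 * x - (4 / π) * y - (2 / π) * t + (16 / π) * x ^ 2

/-- One-loop β-function of the local sextic coupling for the `p = 3` model with
disorder coupling `t`. -/
noncomputable def beta6 (x y t : ℝ) : ℝ :=
  -4 * y + (48 / π) * x * y + (24 / π) * x * t

/-- First-order expansion of the first fixed trajectory of the `p = 3` model:
if `(u₄(t), u₆(t))` is a fixed trajectory with `(u₄(0), u₆(0)) = (3π/16, 0)`,
then `u₄′(0) = −8/(15π)` and `u₆′(0) = −9/10`. -/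
theorem p3_first_fixed_trajectory (u₄ u₆ : ℝ → ℝ)
    (h₄ : DifferentiableAt ℝ u₄ 0) (h₆ : DifferentiableAt ℝ u₆ 0)
    (hfix : ∀ᶠ t in 𝓝 (0 : ℝ), beta4 (u₄ t) (u₆ t) t = 0 ∧ beta6 (u₄ t) (u₆ t) t = 0)
    (h₄0 : u₄ 0 = 3 * π / 16) (h₆0 : u₆ 0 = 0) :
    deriv u₄ 0 = -8 / (15 * π) ∧ deriv u₆ 0 = -9 / 10 := by
  have hπ : (π : ℝ) ≠ 0 := Real.pi_ne_zero
  set a := deriv u₄ 0 with ha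
  set b := deriv u₆ 0 with hb
  have h4d := h₄.hasDerivAt
  have h6d := h₆.hasDerivAt
  have hid : HasDerivAt (fun t : ℝ => t) 1 0 := hasDerivAt_id 0
  have H4 : HasDerivAt (fun t => beta4 (u₄ t) (u₆ t) t)
      ((-3) * a - (4 / π) * b - (2 / π) * 1 + (16 / π) * (2 * u₄ 0 ^ 1 * a)) 0 := by
    unfold beta4
    exact (((h4d.const_mul (-3)).sub (h6d.const_mul (4 / π))).sub
      (hid.const_mul (2 / π))).add ((h4d.pow 2).const_mul (16 / π))
  have H6 : HasDerivAt (fun t => beta6 (u₄ t) (u₆ t) t)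
      ((-4) * b + (48 / π) * (a * u₆ 0 + u₄ 0 * b) + (24 / π) * (a * 0 + u₄ 0 * 1)) 0 := by
    unfold beta6
    exact (((h6d.const_mul (-4)).add (((h4d.mul h6d).const_mul (48 / π)))).add
      ((h4d.mul hid).const_mul (24 / π))).congr_of_eventuallyEq
      (Eventually.of_forall fun t => by simp only [Pi.add_apply, Pi.mul_apply]; ring)
  have e4 : (fun t => beta4 (u₄ t) (u₆ t) t) =ᶠ[𝓝 (0 : ℝ)] fun _ => (0 : ℝ) :=
    hfix.mono fun t ht => ht.1
  have e6 : (fun t => beta6 (u₄ t) (u₆ t) t) =ᶠ[𝓝 (0 : ℝ)] fun _ => (0 : ℝ) :=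
    hfix.mono fun t ht => ht.2
  have d4 : deriv (fun t => beta4 (u₄ t) (u₆ t) t) 0 = 0 := by
    rw [e4.deriv_eq]; simp
  have d6 : deriv (fun t => beta6 (u₄ t) (u₆ t) t) 0 = 0 := by
    rw [e6.deriv_eq]; simp
  have E4 : (-3) * a - (4 / π) * b - (2 / π) * 1 + (16 / π) * (2 * u₄ 0 ^ 1 * a) = 0 := by
    rw [← H4.deriv]; exact d4
  have E6 : (-4) * b + (48 / π) * (a * u₆ 0 + u₄ 0 * b) + (24 / π) * (a * 0 + u₄ 0 * 1) = 0 := by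
    rw [← H6.deriv]; exact d6
  simp only [h₄0, h₆0] at E4 E6
  have hb' : b = -9 / 10 := by
    have h6' : π * (b * 80 + 72) = 0 := by
      field_simp at E6
      linear_combination E6
    have := (mul_eq_zero.mp h6').resolve_left hπ
    linarith
  have ha' : a = -8 / (15 * π) := by
    rw [hb'] at E4
    have h4' : π ^ 2 * (480 * (π * a) + 256) = 0 := by
      field_simp at E4
      linear_combination (16 * π ^ 2) * E4
    have hpa := (mul_eq_zero.mp h4').resolve_left (pow_ne_zero 2 hπ)
    rw [eq_div_iff (mul_ne_zero (by norm_num) hπ)]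
    linear_combination hpa / 32
  exact ⟨ha', hb'⟩
end

section
/- Define β₄(x, y, t) = −3x − (4/π)y − (2/π)t + (16/π)x² and β₆(x, y, t) = −4y + (48/π)xy + (24/π)xt. Let u₄, u₆ : ℝ → ℝ be differentiable at 0, with β₄(u₄(t), u₆(t), t) = 0 and β₆(u₄(t), u₆(t), t) = 0 for all t in a neighborhood of 0, and (u₄(0), u₆(0)) = (0, 0). Then u₄′(0) = −2/(3π) and u₆′(0) = 0. -/
open Real Filter Topology

/-- First-order expansion of the '+' fixed trajectory of the `p = 3` model:
if `(u₄(t), u₆(t))` is a fixed trajectory with `(u₄(0), u₆(0)) = (0, 0)`,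
then `u₄′(0) = −2/(3π)` and `u₆′(0) = 0`. -/
theorem p3_plus_fixed_trajectory (u₄ u₆ : ℝ → ℝ)
    (h₄ : DifferentiableAt ℝ u₄ 0) (h₆ : DifferentiableAt ℝ u₆ 0)
    (hfix : ∀ᶠ t in 𝓝 (0 : ℝ), beta4 (u₄ t) (u₆ t) t = 0 ∧ beta6 (u₄ t) (u₆ t) t = 0)
    (h₄0 : u₄ 0 = 0) (h₆0 : u₆ 0 = 0) :
    deriv u₄ 0 = -2 / (3 * π) ∧ deriv u₆ 0 = 0 := by
  have hπ : (π : ℝ) ≠ 0 := Real.pi_ne_zero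
  set a := deriv u₄ 0 with ha
  set b := deriv u₆ 0 with hb
  have hu₄ : HasDerivAt u₄ a 0 := h₄.hasDerivAt
  have hu₆ : HasDerivAt u₆ b 0 := h₆.hasDerivAt
  -- derivative of t ↦ beta4 (u₄ t) (u₆ t) t at 0
  have H4 : HasDerivAt (fun t => beta4 (u₄ t) (u₆ t) t)
      (-3 * a - (4 / π) * b - (2 / π) + (16 / π) * (2 * u₄ 0 * a)) 0 := by
    unfold beta4
    exact ((((hu₄.const_mul (-3)).sub (hu₆.const_mul (4 / π))).sub
      ((hasDerivAt_id 0).const_mul (2 / π))).add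
      (((hu₄.pow 2).const_mul (16 / π)))).congr_deriv (by ring)
  have H6 : HasDerivAt (fun t => beta6 (u₄ t) (u₆ t) t)
      (-4 * b + (48 / π) * (a * u₆ 0 + u₄ 0 * b) +
        (24 / π) * (a * 0 + u₄ 0 * 1)) 0 := by
    unfold beta6
    have base := (((hu₆.const_mul (-4)).add ((hu₄.mul hu₆).const_mul (48 / π))).add
      (((hu₄.mul (hasDerivAt_id 0)).const_mul (24 / π))))
    convert base using 1
    · rfl
    · rfl
    funext t; simp only [Pi.add_apply, Pi.mul_apply, id_eq]; ring
    rfl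
  have hE4 : (fun t => beta4 (u₄ t) (u₆ t) t) =ᶠ[𝓝 (0:ℝ)] fun _ => (0:ℝ) :=
    hfix.mono fun t ht => ht.1
  have hE6 : (fun t => beta6 (u₄ t) (u₆ t) t) =ᶠ[𝓝 (0:ℝ)] fun _ => (0:ℝ) :=
    hfix.mono fun t ht => ht.2
  have H4' : HasDerivAt (fun _ : ℝ => (0:ℝ))
      (-3 * a - (4 / π) * b - (2 / π) + (16 / π) * (2 * u₄ 0 * a)) 0 :=
    H4.congr_of_eventuallyEq hE4.symm
  have H6' : HasDerivAt (fun _ : ℝ => (0:ℝ))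
      (-4 * b + (48 / π) * (a * u₆ 0 + u₄ 0 * b) + (24 / π) * (a * 0 + u₄ 0 * 1)) 0 :=
    H6.congr_of_eventuallyEq hE6.symm
  have e4 : -3 * a - (4 / π) * b - (2 / π) + (16 / π) * (2 * u₄ 0 * a) = 0 := by
    have := H4'.deriv
    rw [deriv_const] at this
    exact this.symm
  have e6 : -4 * b + (48 / π) * (a * u₆ 0 + u₄ 0 * b) + (24 / π) * (a * 0 + u₄ 0 * 1) = 0 := by
    have := H6'.deriv
    rw [deriv_const] at this
    exact this.symm
  simp only [h₄0, h₆0, mul_zero, zero_mul, mul_one, add_zero, zero_add, mul_comm] at e4 e6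
  have hb0 : b = 0 := by linarith [e6]
  constructor
  · rw [hb0] at e4
    field_simp at e4 ⊢
    linarith
  · exact hb0
end

section
/- Define β₄(x, y, t) = −3x − (4/π)y − (2/π)t + (16/π)x² and β₆(x, y, t) = −4y + (48/π)xy + (24/π)xt. Let u₄, u₆ : ℝ → ℝ be differentiable at 0, with β₄(u₄(t), u₆(t), t) = 0 and β₆(u₄(t), u₆(t), t) = 0 for all t in a neighborhood of 0, and (u₄(0), u₆(0)) = (π/12, −5π²/144). Then u₄′(0) = 6/(5π) and u₆′(0) = −3/5. -/
open Real Filter Topology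

/-- First-order expansion of the '−' fixed trajectory of the `p = 3` model:
if `(u₄(t), u₆(t))` is a fixed trajectory with `(u₄(0), u₆(0)) = (π/12, −5π²/144)`,
then `u₄′(0) = 6/(5π)` and `u₆′(0) = −3/5`. -/
theorem p3_minus_fixed_trajectory (u₄ u₆ : ℝ → ℝ)
    (h₄ : DifferentiableAt ℝ u₄ 0) (h₆ : DifferentiableAt ℝ u₆ 0)
    (hfix : ∀ᶠ t in 𝓝 (0 : ℝ), beta4 (u₄ t) (u₆ t) t = 0 ∧ beta6 (u₄ t) (u₆ t) t = 0)
    (h₄0 : u₄ 0 = π / 12) (h₆0 : u₆ 0 = -5 * π ^ 2 / 144) :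
    deriv u₄ 0 = 6 / (5 * π) ∧ deriv u₆ 0 = -3 / 5 := by
  have hπ : (π : ℝ) ≠ 0 := Real.pi_ne_zero
  set a := deriv u₄ 0 with ha
  set b := deriv u₆ 0 with hb
  have hd₄ : HasDerivAt u₄ a 0 := h₄.hasDerivAt
  have hd₆ : HasDerivAt u₆ b 0 := h₆.hasDerivAt
  have hdid : HasDerivAt (fun t : ℝ => t) 1 (0 : ℝ) := hasDerivAt_id 0
  -- derivative of the composed beta4
  have hB4 : HasDerivAt (fun t => beta4 (u₄ t) (u₆ t) t)
      (-3 * a - (4 / π) * b - (2 / π) * 1 + (16 / π) * (2 * u₄ 0 ^ 1 * a)) 0 := by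
    unfold beta4
    exact ((((hd₄.const_mul (-3)).sub (hd₆.const_mul (4 / π))).sub
      (hdid.const_mul (2 / π))).add ((hd₄.pow 2).const_mul (16 / π)))
  have hB6 : HasDerivAt (fun t => beta6 (u₄ t) (u₆ t) t)
      (-4 * b + (48 / π) * (a * u₆ 0 + u₄ 0 * b) + (24 / π) * (a * 0 + u₄ 0 * 1)) 0 := by
    unfold beta6
    have h1 : HasDerivAt (fun t => u₄ t * u₆ t) (a * u₆ 0 + u₄ 0 * b) 0 := hd₄.mul hd₆
    have h2 : HasDerivAt (fun t => u₄ t * t) (a * 0 + u₄ 0 * 1) 0 := hd₄.mul hdid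
    have H := ((hd₆.const_mul (-4)).add (h1.const_mul (48 / π))).add (h2.const_mul (24 / π))
    exact H.congr_of_eventuallyEq (Filter.Eventually.of_forall fun t => by simp only [Pi.add_apply]; ring)
  have hB4z : HasDerivAt (fun t => beta4 (u₄ t) (u₆ t) t) 0 0 :=
    (hasDerivAt_const (0 : ℝ) (0 : ℝ)).congr_of_eventuallyEq
      (hfix.mono fun t ht => ht.1)
  have hB6z : HasDerivAt (fun t => beta6 (u₄ t) (u₆ t) t) 0 0 :=
    (hasDerivAt_const (0 : ℝ) (0 : ℝ)).congr_of_eventuallyEq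
      (hfix.mono fun t ht => ht.2)
  have e4 := hB4.unique hB4z
  have e6 := hB6.unique hB6z
  rw [h₄0] at e4 e6
  rw [h₆0] at e6
  have hπ2 : (0:ℝ) < π := Real.pi_pos
  have haa : a = 6 / (5 * π) := by
    field_simp at e4 e6 ⊢
    nlinarith [sq_nonneg π, hπ2]
  have hbb : b = -3 / 5 := by
    rw [haa] at e4
    have hπ4 : (0:ℝ) < π ^ 4 := by positivity
    field_simp at e4 ⊢
    nlinarith [hπ4, mul_pos hπ4 hπ2, mul_pos hπ2 hπ2]
  exact ⟨haa, hbb⟩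
end
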